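/- The SFTR-1/2 weights are strictly increasing from index 1 on: ω_m > ω_{m−1} for every integer m ≥ 2. -/

import Mathlib

/-- The SFTR-1/2 weights `ω_m`. -/
noncomputable def sftrW (α : ℝ) : ℕ → ℝ
  | 0 => (2 * α / (α + 1)) ^ α
  | 1 => -α * (2 * α / (α + 1)) ^ (α + 1)
  | (m + 2) =>
      2 * α / (((m : ℝ) + 2) * (α + 1)) *
        (((((m : ℝ) + 2) - 1) / α - α) * sftrW α (m + 1) +
          (α - 1) / (2 * α) * (((m : ℝ) + 2) - 2) * sftrW α m)

/-- One step of the recurrence preserves the invariant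
`a < 0 ∧ b < 0 ∧ b ≤ (1-α)·a ∧ a < b` (with `a = ω_{n-2}`, `b = ω_{n-1}`). -/
lemma sftr_step (α n a b : ℝ) (hα0 : 0 < α) (hα1 : α < 1) (hn : 3 ≤ n)
    (ha : a < 0) (hb : b < 0) (hab : b ≤ (1 - α) * a) (hlt : a < b) :
    (2 * α / (n * (α + 1)) * (((n - 1) / α - α) * b + (α - 1) / (2 * α) * (n - 2) * a) < 0) ∧
    (2 * α / (n * (α + 1)) * (((n - 1) / α - α) * b + (α - 1) / (2 * α) * (n - 2) * a) ≤ (1 - α) * b) ∧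
    (b < 2 * α / (n * (α + 1)) * (((n - 1) / α - α) * b + (α - 1) / (2 * α) * (n - 2) * a)) := by
  have hd : 0 < n * (α + 1) := by positivity
  have hw : 2 * α / (n * (α + 1)) * (((n - 1) / α - α) * b + (α - 1) / (2 * α) * (n - 2) * a)
      = ((2 * (n - 1) - 2 * α ^ 2) * b + (α - 1) * (n - 2) * a) / (n * (α + 1)) := by
    field_simp
  rw [hw]
  have hα2 : α ^ 2 < 1 := by nlinarith
  have hn2 : (0:ℝ) ≤ n - 2 := by linarith
  refine ⟨div_neg_of_neg_of_pos ?_ hd, (div_le_iff₀ hd).2 ?_, (lt_div_iff₀ hd).2 ?_⟩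
  · nlinarith [mul_le_mul_of_nonneg_left hab (by nlinarith : (0:ℝ) ≤ 2 * (n - 1) - 2 * α ^ 2),
      mul_neg_of_pos_of_neg (mul_pos (by linarith : (0:ℝ) < 1 - α)
        (by nlinarith : (0:ℝ) < n - 2 * α ^ 2)) ha]
  · nlinarith [mul_le_mul_of_nonneg_left hab hn2,
      mul_nonpos_of_nonneg_of_nonpos (mul_nonneg hn2 (sq_nonneg α)) hb.le]
  · nlinarith [mul_lt_mul_of_neg_left hlt (by nlinarith : (α - 1) * (n - 2) < 0),
      mul_neg_of_pos_of_neg (by nlinarith : (0:ℝ) < 2 * α * (1 + α)) hb]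

theorem sftrW_strict_mono (α : ℝ) (hα : α ∈ Set.Ioo (0 : ℝ) 1) :
    ∀ m : ℕ, 2 ≤ m → sftrW α (m - 1) < sftrW α m := by
  obtain ⟨hα0, hα1⟩ := hα
  -- the invariant, proved by induction
  have key : ∀ k : ℕ, sftrW α (k + 1) < 0 ∧ sftrW α (k + 2) < 0 ∧
      sftrW α (k + 2) ≤ (1 - α) * sftrW α (k + 1) ∧ sftrW α (k + 1) < sftrW α (k + 2) := by
    intro k
    induction k with
    | zero =>
      have h1 : sftrW α 1 < 0 := by
        show -α * (2 * α / (α + 1)) ^ (α + 1) < 0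
        have : (0:ℝ) < (2 * α / (α + 1)) ^ (α + 1) :=
          Real.rpow_pos_of_pos (by positivity) _
        nlinarith
      have h2 : sftrW α 2 = (1 - α) * sftrW α 1 := by
        show 2 * α / (((0:ℕ) + 2 : ℝ) * (α + 1)) *
          ((((((0:ℕ):ℝ) + 2) - 1) / α - α) * sftrW α 1 +
            (α - 1) / (2 * α) * ((((0:ℕ):ℝ) + 2) - 2) * sftrW α 0) = (1 - α) * sftrW α 1
        push_cast
        field_simp
        ring
      refine ⟨h1, ?_, le_of_eq h2, ?_⟩
      · rw [h2]; nlinarith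
      · rw [h2]; nlinarith
    | succ k ih =>
      obtain ⟨ha, hb, hab, hlt⟩ := ih
      have hrec : sftrW α (k + 3) = 2 * α / ((((k:ℝ) + 3)) * (α + 1)) *
          (((((k:ℝ) + 3) - 1) / α - α) * sftrW α (k + 2) +
            (α - 1) / (2 * α) * ((((k:ℝ) + 3) - 2)) * sftrW α (k + 1)) := by
        show sftrW α ((k+1) + 2) = _
        rw [sftrW]
        push_cast
        ring_nf
      have hs := sftr_step α ((k:ℝ) + 3) (sftrW α (k + 1)) (sftrW α (k + 2)) hα0 hα1
        (by linarith [Nat.cast_nonneg (α := ℝ) k]) ha hb hab hlt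
      refine ⟨hb, ?_, ?_, ?_⟩
      · rw [hrec]; exact hs.1
      · rw [hrec]; exact hs.2.1
      · rw [hrec]; exact hs.2.2
  intro m hm
  obtain ⟨k, rfl⟩ : ∃ k, m = k + 2 := ⟨m - 2, by omega⟩
  have : k + 2 - 1 = k + 1 := by omega
  rw [this]
  exact (key k).2.2.2
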